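/- Let d ≥ 1, q > 0, τ > 0, and let x_1, …, x_k ∈ ℝ^d with ‖x_s‖_2 ≤ 1 for all s ∈ [k]. Set V_s = τ·I_d + Σ_{t=1}^{s} x_t x_tᵀ and let J ⊆ [k] be the set of indices s with x_sᵀ V_{s-1}^{-1} x_s ≥ q. Then |J| ≤ (d/ln(1+q)) · ln(1 + |J|/(d·τ)). -/

import Mathlib

open Matrix Finset

section EllipticalAux

variable {d : ℕ}

lemma aux_posSemidef_vecMulVec (u : Fin d → ℝ) : (vecMulVec u u).PosSemidef := by
  have h : vecMulVec u u = (Matrix.replicateRow Unit u)ᴴ * Matrix.replicateRow Unit u := by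
    rw [vecMulVec_eq Unit]
    congr 1
  rw [h]
  exact posSemidef_conjTranspose_mul_self _

lemma aux_posSemidef_sum (x : ℕ → Fin d → ℝ) (S : Finset ℕ) :
    (∑ t ∈ S, vecMulVec (x t) (x t)).PosSemidef := by
  induction S using Finset.cons_induction with
  | empty => simpa using Matrix.PosSemidef.zero
  | cons a S ha ih =>
    rw [Finset.sum_cons]
    exact (aux_posSemidef_vecMulVec (x a)).add ih

lemma aux_posDef {τ : ℝ} (hτ : (0:ℝ) < τ) (x : ℕ → Fin d → ℝ) (S : Finset ℕ) :
    (τ • (1 : Matrix (Fin d) (Fin d) ℝ) + ∑ t ∈ S, vecMulVec (x t) (x t)).PosDef := by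
  refine Matrix.PosDef.add_posSemidef ?_ (aux_posSemidef_sum x S)
  rw [Matrix.smul_one_eq_diagonal]
  exact Matrix.posDef_diagonal_iff.mpr fun _ => hτ

lemma aux_quad_lb {A : Matrix (Fin d) (Fin d) ℝ} (hA : A.PosDef) (u y : Fin d → ℝ) :
    2 * (u ⬝ᵥ y) - y ⬝ᵥ A *ᵥ y ≤ u ⬝ᵥ A⁻¹ *ᵥ u := by
  have hdet : IsUnit A.det := hA.det_pos.ne'.isUnit
  have hsym : Aᵀ = A := by
    have := hA.isHermitian.eq
    simpa [Matrix.conjTranspose_eq_transpose_of_trivial] using this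
  have hinv_sym : (A⁻¹)ᵀ = A⁻¹ := by
    have := hA.inv.isHermitian.eq
    simpa [Matrix.conjTranspose_eq_transpose_of_trivial] using this
  set w : Fin d → ℝ := A⁻¹ *ᵥ u with hw
  have hAw : A *ᵥ w = u := by
    rw [hw, Matrix.mulVec_mulVec, Matrix.mul_nonsing_inv _ hdet, Matrix.one_mulVec]
  have h0 : 0 ≤ (y - w) ⬝ᵥ A *ᵥ (y - w) := by
    have := hA.posSemidef.dotProduct_mulVec_nonneg (y - w)
    simpa using this
  have hwAy : w ⬝ᵥ A *ᵥ y = u ⬝ᵥ y := by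
    rw [Matrix.dotProduct_mulVec, ← Matrix.mulVec_transpose, hsym, hAw]
  have hyAw : y ⬝ᵥ A *ᵥ w = u ⬝ᵥ y := by
    rw [hAw, dotProduct_comm]
  have hwAw : w ⬝ᵥ A *ᵥ w = u ⬝ᵥ A⁻¹ *ᵥ u := by
    rw [hAw, hw, Matrix.dotProduct_mulVec, ← Matrix.mulVec_transpose, hinv_sym, dotProduct_comm]
  have hexp : (y - w) ⬝ᵥ A *ᵥ (y - w)
      = y ⬝ᵥ A *ᵥ y - 2 * (u ⬝ᵥ y) + u ⬝ᵥ A⁻¹ *ᵥ u := by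
    rw [Matrix.mulVec_sub, dotProduct_sub, sub_dotProduct,
      sub_dotProduct, hwAy, hyAw, hwAw]
    ring
  linarith [hexp ▸ h0]

lemma aux_inv_quad_anti {A B : Matrix (Fin d) (Fin d) ℝ} (hA : A.PosDef) (hB : B.PosDef)
    (hle : ∀ y, y ⬝ᵥ A *ᵥ y ≤ y ⬝ᵥ B *ᵥ y) (u : Fin d → ℝ) :
    u ⬝ᵥ B⁻¹ *ᵥ u ≤ u ⬝ᵥ A⁻¹ *ᵥ u := by
  have hdetB : IsUnit B.det := hB.det_pos.ne'.isUnit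
  set y : Fin d → ℝ := B⁻¹ *ᵥ u with hy
  have hBy : B *ᵥ y = u := by
    rw [hy, Matrix.mulVec_mulVec, Matrix.mul_nonsing_inv _ hdetB, Matrix.one_mulVec]
  have h1 : u ⬝ᵥ B⁻¹ *ᵥ u = 2 * (u ⬝ᵥ y) - y ⬝ᵥ B *ᵥ y := by
    rw [hBy, dotProduct_comm y u, ← hy]
    ring
  have h2 := aux_quad_lb hA u y
  have h3 := hle y
  linarith

lemma aux_det_add_vecMulVec {A : Matrix (Fin d) (Fin d) ℝ} (hA : A.PosDef) (u : Fin d → ℝ) :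
    (A + vecMulVec u u).det = A.det * (1 + u ⬝ᵥ A⁻¹ *ᵥ u) := by
  have hdet : IsUnit A.det := hA.det_pos.ne'.isUnit
  rw [vecMulVec_eq Unit, Matrix.det_add_replicateCol_mul_replicateRow hdet u u]
  congr 1
  rw [Matrix.det_unique]
  simp only [Matrix.add_apply, Matrix.one_apply_eq, Matrix.mul_apply, Matrix.replicateCol_apply,
    Matrix.replicateRow_apply, dotProduct, Matrix.mulVec, Finset.sum_mul]
  congr 1
  rw [Finset.sum_comm]
  exact Finset.sum_congr rfl fun i _ => by
    rw [Finset.mul_sum]; exact Finset.sum_congr rfl fun j _ => by ring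

lemma aux_trace_eq_sum_eigenvalues {A : Matrix (Fin d) (Fin d) ℝ} (hA : A.IsHermitian) :
    A.trace = ∑ i, hA.eigenvalues i := by
  rw [hA.trace_eq_sum_eigenvalues]
  simp

lemma aux_trace_pos {A : Matrix (Fin d) (Fin d) ℝ} (hA : A.PosDef) (hd : 1 ≤ d) :
    0 < A.trace := by
  rw [aux_trace_eq_sum_eigenvalues hA.isHermitian]
  have : Nonempty (Fin d) := ⟨⟨0, by omega⟩⟩
  exact Finset.sum_pos (fun i _ => hA.eigenvalues_pos i) Finset.univ_nonempty

lemma aux_det_le_pow {A : Matrix (Fin d) (Fin d) ℝ} (hA : A.PosDef) (hd : 1 ≤ d) :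
    A.det ≤ (A.trace / d) ^ d := by
  have hd0 : (d : ℝ) ≠ 0 := Nat.cast_ne_zero.mpr (by omega)
  set μ : Fin d → ℝ := hA.isHermitian.eigenvalues with hμ
  have hμpos : ∀ i, 0 < μ i := fun i => hA.eigenvalues_pos i
  have hdet : A.det = ∏ i, μ i := by
    have := hA.isHermitian.det_eq_prod_eigenvalues
    simpa using this
  have htr : A.trace = ∑ i, μ i := aux_trace_eq_sum_eigenvalues hA.isHermitian
  have hAM : ∏ i, (μ i) ^ ((1:ℝ)/d) ≤ ∑ i, (1/(d:ℝ)) * μ i := by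
    apply Real.geom_mean_le_arith_mean_weighted
    · intro i _; positivity
    · simp [Finset.sum_const, hd0]
    · intro i _; exact (hμpos i).le
  have hsum : ∑ i, (1/(d:ℝ)) * μ i = A.trace / d := by
    rw [htr, Finset.sum_div]
    exact Finset.sum_congr rfl fun i _ => by ring
  have hprod : (∏ i, (μ i) ^ ((1:ℝ)/d)) ^ d = ∏ i, μ i := by
    rw [← Finset.prod_pow]
    refine Finset.prod_congr rfl fun i _ => ?_
    rw [← Real.rpow_natCast ((μ i) ^ ((1:ℝ)/d)) d, ← Real.rpow_mul (hμpos i).le]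
    rw [one_div, inv_mul_cancel₀ hd0, Real.rpow_one]
  calc A.det = (∏ i, (μ i) ^ ((1:ℝ)/d)) ^ d := by rw [hprod, hdet]
    _ ≤ (∑ i, (1/(d:ℝ)) * μ i) ^ d := by
        apply pow_le_pow_left₀ _ hAM
        exact Finset.prod_nonneg fun i _ => Real.rpow_nonneg (hμpos i).le _
    _ = (A.trace / d) ^ d := by rw [hsum]

lemma aux_quad_mono {τ : ℝ} (hτ : (0:ℝ) < τ) (x : ℕ → Fin d → ℝ) {S T : Finset ℕ}
    (hST : S ⊆ T) (u : Fin d → ℝ) :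
    u ⬝ᵥ (τ • (1 : Matrix (Fin d) (Fin d) ℝ) + ∑ t ∈ T, vecMulVec (x t) (x t))⁻¹ *ᵥ u
      ≤ u ⬝ᵥ (τ • (1 : Matrix (Fin d) (Fin d) ℝ) + ∑ t ∈ S, vecMulVec (x t) (x t))⁻¹ *ᵥ u := by
  apply aux_inv_quad_anti (aux_posDef hτ x S) (aux_posDef hτ x T)
  intro y
  have hdecomp : τ • (1 : Matrix (Fin d) (Fin d) ℝ) + ∑ t ∈ T, vecMulVec (x t) (x t)
      = (τ • (1 : Matrix (Fin d) (Fin d) ℝ) + ∑ t ∈ S, vecMulVec (x t) (x t))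
        + ∑ t ∈ T \ S, vecMulVec (x t) (x t) := by
    rw [add_assoc]
    congr 1
    rw [add_comm, Finset.sum_sdiff hST]
  rw [hdecomp]
  simp only [Matrix.add_mulVec, dotProduct_add]
  have hpsd := (aux_posSemidef_sum x (T \ S)).dotProduct_mulVec_nonneg y
  simp only [star_trivial] at hpsd
  linarith

end EllipticalAux

theorem elliptical_potential_count_implicit
    (d k : ℕ) (hd : 1 ≤ d) (q τ : ℝ) (hq : 0 < q) (hτ : 0 < τ)
    (x : ℕ → EuclideanSpace ℝ (Fin d))
    (hx : ∀ s ∈ Finset.Icc 1 k, ‖x s‖ ≤ 1)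
    (V : ℕ → Matrix (Fin d) (Fin d) ℝ)
    (hV : ∀ s, V s = τ • (1 : Matrix (Fin d) (Fin d) ℝ)
        + ∑ t ∈ Finset.Icc 1 s, Matrix.vecMulVec (x t) (x t))
    (J : Finset ℕ)
    (hJ : J = (Finset.Icc 1 k).filter (fun s => q ≤ x s ⬝ᵥ (V (s - 1))⁻¹ *ᵥ x s)) :
    (J.card : ℝ) ≤ (d / Real.log (1 + q))
        * Real.log (1 + (J.card : ℝ) / (d * τ)) := by
  have hd0 : (d : ℝ) ≠ 0 := Nat.cast_ne_zero.mpr (by omega)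
  have hdpos : (0:ℝ) < d := by positivity
  set y : ℕ → Fin d → ℝ := fun t => x t with hy
  set X : Finset ℕ → Matrix (Fin d) (Fin d) ℝ :=
    fun S => τ • (1 : Matrix (Fin d) (Fin d) ℝ) + ∑ t ∈ S, Matrix.vecMulVec (y t) (y t)
    with hXdef
  have hXpos : ∀ S, (X S).PosDef := fun S => aux_posDef hτ y S
  have hJsub : J ⊆ Finset.Icc 1 k := by rw [hJ]; exact Finset.filter_subset _ _
  -- main induction
  have main : ∀ s : ℕ,
      τ ^ d * (1+q) ^ ((J ∩ Finset.Icc 1 s).card) ≤ (X (J ∩ Finset.Icc 1 s)).det := by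
    intro s
    induction s with
    | zero =>
      have h0 : J ∩ Finset.Icc 1 0 = ∅ := by
        rw [Finset.Icc_eq_empty (by omega)]; exact Finset.inter_empty J
      rw [h0]
      have : X ∅ = τ • (1 : Matrix (Fin d) (Fin d) ℝ) := by
        simp [hXdef]
      rw [this, Matrix.smul_one_eq_diagonal, Matrix.det_diagonal]
      simp
    | succ s ih =>
      by_cases hs : s + 1 ∈ J
      · have hnm : s + 1 ∉ J ∩ Finset.Icc 1 s := by
          simp [Finset.mem_inter, Finset.mem_Icc]
        have hins : J ∩ Finset.Icc 1 (s+1) = insert (s+1) (J ∩ Finset.Icc 1 s) := by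
          ext t
          simp only [Finset.mem_inter, Finset.mem_Icc, Finset.mem_insert]
          constructor
          · rintro ⟨h1, h2, h3⟩
            rcases Nat.lt_succ_iff_lt_or_eq.mp (Nat.lt_succ_of_le h3) with h | h
            · right; exact ⟨h1, h2, by omega⟩
            · left; exact h
          · rintro (rfl | ⟨h1, h2, h3⟩)
            · refine ⟨hs, by omega, le_refl _⟩
            · exact ⟨h1, h2, by omega⟩
        have hq' : q ≤ y (s+1) ⬝ᵥ (X (J ∩ Finset.Icc 1 s))⁻¹ *ᵥ y (s+1) := by
          have hmem := hJ ▸ hs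
          rw [Finset.mem_filter] at hmem
          have h1 : q ≤ y (s+1) ⬝ᵥ (V s)⁻¹ *ᵥ y (s+1) := by
            have := hmem.2
            simpa using this
          have h2 : y (s+1) ⬝ᵥ (V s)⁻¹ *ᵥ y (s+1)
              ≤ y (s+1) ⬝ᵥ (X (J ∩ Finset.Icc 1 s))⁻¹ *ᵥ y (s+1) := by
            rw [hV s]
            exact aux_quad_mono hτ y Finset.inter_subset_right (y (s+1))
          linarith
        have hXins : X (insert (s+1) (J ∩ Finset.Icc 1 s))
            = X (J ∩ Finset.Icc 1 s) + vecMulVec (y (s+1)) (y (s+1)) := by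
          simp only [hXdef]
          rw [Finset.sum_insert hnm]
          abel
        have hdetpos := (hXpos (J ∩ Finset.Icc 1 s)).det_pos
        rw [hins, Finset.card_insert_of_notMem hnm, hXins,
          aux_det_add_vecMulVec (hXpos _) _]
        calc τ ^ d * (1+q) ^ ((J ∩ Finset.Icc 1 s).card + 1)
            = (τ ^ d * (1+q) ^ (J ∩ Finset.Icc 1 s).card) * (1+q) := by ring
          _ ≤ (X (J ∩ Finset.Icc 1 s)).det * (1+q) :=
              mul_le_mul_of_nonneg_right ih (by linarith)
          _ ≤ (X (J ∩ Finset.Icc 1 s)).det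
              * (1 + y (s+1) ⬝ᵥ (X (J ∩ Finset.Icc 1 s))⁻¹ *ᵥ y (s+1)) := by
              apply mul_le_mul_of_nonneg_left (by linarith) hdetpos.le
      · have heq : J ∩ Finset.Icc 1 (s+1) = J ∩ Finset.Icc 1 s := by
          ext t
          simp only [Finset.mem_inter, Finset.mem_Icc]
          constructor
          · rintro ⟨h1, h2, h3⟩
            have : t ≠ s + 1 := fun h => hs (h ▸ h1)
            exact ⟨h1, h2, by omega⟩
          · rintro ⟨h1, h2, h3⟩
            exact ⟨h1, h2, by omega⟩
        rw [heq]
        exact ih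
  have hJk : J ∩ Finset.Icc 1 k = J := Finset.inter_eq_left.mpr hJsub
  have h1 : τ ^ d * (1+q) ^ J.card ≤ (X J).det := by
    have := main k
    rwa [hJk] at this
  -- trace bound
  have htrb : (X J).trace ≤ τ * d + J.card := by
    have htr : (X J).trace = τ * d + ∑ t ∈ J, ∑ i, y t i * y t i := by
      simp only [hXdef]
      rw [Matrix.trace_add, Matrix.trace_smul, Matrix.trace_one, Matrix.trace_sum]
      have h1 : ∀ t : ℕ, (vecMulVec (y t) (y t)).trace = ∑ i, y t i * y t i := fun t => by
        simp [Matrix.trace, Matrix.diag, vecMulVec_apply]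
      simp only [h1]
      simp [smul_eq_mul, mul_comm]
    rw [htr]
    have hbound : ∑ t ∈ J, ∑ i, y t i * y t i ≤ (J.card : ℝ) := by
      have : ∀ t ∈ J, ∑ i, y t i * y t i ≤ 1 := by
        intro t ht
        have hxt : ‖x t‖ ≤ 1 := hx t (hJsub ht)
        have hnn : ‖x t‖ ^ 2 ≤ 1 := by nlinarith [norm_nonneg (x t)]
        have heq2 : ∑ i, y t i * y t i = ‖x t‖ ^ 2 := by
          rw [EuclideanSpace.norm_eq, Real.sq_sqrt (by positivity)]
          exact Finset.sum_congr rfl fun i _ => by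
            rw [Real.norm_eq_abs, sq_abs]; ring
        linarith [heq2 ▸ hnn]
      calc ∑ t ∈ J, ∑ i, y t i * y t i ≤ ∑ t ∈ J, (1:ℝ) := Finset.sum_le_sum this
        _ = J.card := by simp
    linarith
  have htrpos : 0 < (X J).trace := aux_trace_pos (hXpos J) hd
  have h2 : (X J).det ≤ ((τ * d + J.card) / d) ^ d := by
    refine le_trans (aux_det_le_pow (hXpos J) hd) ?_
    apply pow_le_pow_left₀ (by positivity)
    gcongr
  have key : τ ^ d * (1+q) ^ J.card ≤ ((τ * d + J.card) / d) ^ d := le_trans h1 h2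
  have heqpow : ((τ * d + J.card) / d) ^ d = τ ^ d * (1 + (J.card : ℝ) / (d * τ)) ^ d := by
    rw [← mul_pow]
    congr 1
    field_simp
  have key2 : (1+q) ^ J.card ≤ (1 + (J.card : ℝ) / (d * τ)) ^ d := by
    rw [heqpow] at key
    have hτd : (0:ℝ) < τ ^ d := pow_pos hτ d
    exact le_of_mul_le_mul_left key hτd
  have hL : 0 < Real.log (1 + q) := Real.log_pos (by linarith)
  have hlog := Real.log_le_log (pow_pos (by linarith : (0:ℝ) < 1 + q) J.card) key2
  rw [Real.log_pow, Real.log_pow] at hlog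
  rw [div_mul_eq_mul_div, le_div_iff₀ hL]
  exact_mod_cast hlog
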